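/- Let G be a finite connected graph with absorbing vertex a, and for a vertex x ≠ a let S_x(v) denote the expected number of visits to x of a simple random walk started at v before absorption at a. Then S_x(v) ≤ deg(x)·d(x,a) for every vertex v. -/

import Mathlib

/-- `IsVisits G a x S` : `S v` satisfies the linear system characterizing the expected
number of visits to `x` (before absorption at `a`) of the simple random walk on `G`
started at `v`:  `S a = 0` and, for `v ≠ a`,
`S v = [v = x] + (1/deg v) ∑_{u ~ v} S u` (multiplied through by `deg v`). -/
def IsVisits {V : Type*} [Fintype V] [DecidableEq V] (G : SimpleGraph V) [DecidableRel G.Adj]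
    (a x : V) (S : V → ℝ) : Prop :=
  S a = 0 ∧ ∀ v, v ≠ a →
    (G.degree v : ℝ) * S v =
      (if v = x then (G.degree v : ℝ) else 0) + ∑ u ∈ G.neighborFinset v, S u

section Aux

open Finset SimpleGraph

variable {V : Type*} [Fintype V] [DecidableEq V] (G : SimpleGraph V) [DecidableRel G.Adj]

private lemma sum_adj_pairs (f : V → V → ℝ) :
    ∑ p ∈ Finset.univ.filter (fun p : V × V => G.Adj p.1 p.2), f p.1 p.2
      = ∑ v, ∑ u ∈ G.neighborFinset v, f v u := by
  rw [Finset.sum_filter, Fintype.sum_prod_type]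
  refine Finset.sum_congr rfl fun v _ => ?_
  rw [neighborFinset_eq_filter, Finset.sum_filter]

private lemma sum_adj_symm (f : V → V → ℝ) :
    ∑ v, ∑ u ∈ G.neighborFinset v, f v u = ∑ v, ∑ u ∈ G.neighborFinset v, f u v := by
  rw [← sum_adj_pairs, ← sum_adj_pairs]
  exact Finset.sum_equiv (Equiv.prodComm V V)
    (fun p => by simp [G.adj_comm]) (fun p _ => rfl)

private lemma energy_eq {a x : V} (hxa : x ≠ a) {S : V → ℝ} (hS : IsVisits G a x S) :
    ∑ v, ∑ u ∈ G.neighborFinset v, (S v - S u) ^ 2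
      = 2 * ((G.degree x : ℝ) * S x) := by
  have hpt : ∀ v, S v * ∑ u ∈ G.neighborFinset v, S u
      = (G.degree v : ℝ) * S v ^ 2 - (if v = x then (G.degree x : ℝ) * S x else 0) := by
    intro v
    by_cases hva : v = a
    · subst hva
      rw [hS.1, if_neg (fun h => hxa h.symm)]
      ring
    · have h := hS.2 v hva
      by_cases hvx : v = x
      · subst hvx
        rw [if_pos rfl] at h ⊢
        have hsum : ∑ u ∈ G.neighborFinset v, S u
            = (G.degree v : ℝ) * S v - (G.degree v : ℝ) := by linarith
        rw [hsum]
        ring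
      · rw [if_neg hvx, zero_add] at h
        rw [if_neg hvx, ← h]
        ring
  have h1 : ∑ v, ∑ u ∈ G.neighborFinset v, S v ^ 2
      = ∑ v, (G.degree v : ℝ) * S v ^ 2 := by
    refine Finset.sum_congr rfl fun v _ => ?_
    rw [Finset.sum_const, card_neighborFinset_eq_degree, nsmul_eq_mul]
  have h2 : ∑ v, ∑ u ∈ G.neighborFinset v, S u ^ 2
      = ∑ v, (G.degree v : ℝ) * S v ^ 2 := by
    rw [sum_adj_symm]; exact h1
  have h3 : ∑ v, ∑ u ∈ G.neighborFinset v, S v * S u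
      = ∑ v, (G.degree v : ℝ) * S v ^ 2 - (G.degree x : ℝ) * S x := by
    have : ∑ v, ∑ u ∈ G.neighborFinset v, S v * S u
        = ∑ v, ((G.degree v : ℝ) * S v ^ 2 - (if v = x then (G.degree x : ℝ) * S x else 0)) := by
      refine Finset.sum_congr rfl fun v _ => ?_
      rw [← Finset.mul_sum, hpt v]
    rw [this, Finset.sum_sub_distrib]
    congr 1
    simp
  calc ∑ v, ∑ u ∈ G.neighborFinset v, (S v - S u) ^ 2
      = ∑ v, ∑ u ∈ G.neighborFinset v, (S v ^ 2 + S u ^ 2 - 2 * (S v * S u)) := by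
        refine Finset.sum_congr rfl fun v _ => Finset.sum_congr rfl fun u _ => by ring
    _ = (∑ v, ∑ u ∈ G.neighborFinset v, S v ^ 2)
        + (∑ v, ∑ u ∈ G.neighborFinset v, S u ^ 2)
        - 2 * ∑ v, ∑ u ∈ G.neighborFinset v, S v * S u := by
        have e1 : ∀ v : V, ∑ u ∈ G.neighborFinset v, (S v ^ 2 + S u ^ 2 - 2 * (S v * S u))
            = (∑ u ∈ G.neighborFinset v, S v ^ 2) + (∑ u ∈ G.neighborFinset v, S u ^ 2)
              - 2 * ∑ u ∈ G.neighborFinset v, S v * S u := by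
          intro v
          rw [Finset.sum_sub_distrib, Finset.sum_add_distrib, Finset.mul_sum]
        rw [Finset.sum_congr rfl fun v _ => e1 v, Finset.sum_sub_distrib,
          Finset.sum_add_distrib, Finset.mul_sum]
    _ = 2 * ((G.degree x : ℝ) * S x) := by rw [h1, h2, h3]; ring

private lemma max_principle {a x : V} {S : V → ℝ} (hS : IsVisits G a x S) :
    ∀ {w z : V} (_ : G.Walk w z), z = a → (∀ u, S u ≤ S w) → S w ≤ max (S x) 0 := by
  intro w z p
  induction p with
  | nil =>
    intro hz _
    rw [hz, hS.1]
    exact le_max_right _ _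
  | @cons b c z hadj q ih =>
    intro hz hmax
    by_cases hbx : b = x
    · rw [hbx]; exact le_max_left _ _
    by_cases hba : b = a
    · rw [hba, hS.1]; exact le_max_right _ _
    have h := hS.2 b hba
    rw [if_neg hbx, zero_add] at h
    have hzero : ∑ u ∈ G.neighborFinset b, (S b - S u) = 0 := by
      rw [Finset.sum_sub_distrib, Finset.sum_const, card_neighborFinset_eq_degree,
        nsmul_eq_mul]
      linarith
    have hall := (Finset.sum_eq_zero_iff_of_nonneg
      (fun u _ => sub_nonneg.2 (hmax u))).1 hzero
    have hc : S c = S b := by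
      have := hall c ((SimpleGraph.mem_neighborFinset G b c).2 hadj)
      linarith
    have := ih hz (fun u => hc ▸ hmax u)
    linarith

private lemma telescope {S : V → ℝ} :
    ∀ {w z : V} (p : G.Walk w z),
      ((p.darts.map (fun d => S d.toProd.1 - S d.toProd.2)).sum) = S w - S z := by
  intro w z p
  induction p with
  | nil => simp
  | cons hadj q ih =>
    rw [SimpleGraph.Walk.darts_cons, List.map_cons, List.sum_cons, ih]
    simp

end Aux

/-- For a simple random walk on a finite connected graph `G` with absorbing vertex `a`
and a vertex `x ≠ a`, the expected number of visits to `x` before absorption, started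
from any vertex `v`, satisfies `S_x(v) ≤ deg(x) · d(x,a)`. -/
theorem visits_le_degree_mul_dist {V : Type*} [Fintype V] [DecidableEq V]
    (G : SimpleGraph V) [DecidableRel G.Adj] (hconn : G.Connected)
    (a x : V) (hxa : x ≠ a)
    (S : V → ℝ) (hS : IsVisits G a x S) (v : V) :
    S v ≤ (G.degree x : ℝ) * (G.dist x a : ℝ) := by
  classical
  obtain ⟨v0, -, hv0⟩ := Finset.exists_max_image Finset.univ S ⟨x, Finset.mem_univ x⟩
  have hmax : ∀ u, S u ≤ S v0 := fun u => hv0 u (Finset.mem_univ u)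
  obtain ⟨p0⟩ := hconn.preconnected v0 a
  have hvmax : ∀ u, S u ≤ max (S x) 0 :=
    fun u => (hmax u).trans (max_principle G hS p0 rfl hmax)
  have hDnn : (0 : ℝ) ≤ (G.degree x : ℝ) * (G.dist x a : ℝ) := by positivity
  have key : S x ≤ (G.degree x : ℝ) * (G.dist x a : ℝ) := by
    rcases le_or_gt (S x) 0 with hx0 | hx0
    · exact hx0.trans hDnn
    obtain ⟨p, hp, hplen⟩ := hconn.exists_path_of_dist x a
    have hedges : (p.darts.map SimpleGraph.Dart.edge).Nodup := hp.edges_nodup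
    have hdn : p.darts.Nodup := hedges.of_map _
    set F : Finset G.Dart := p.darts.toFinset with hF
    have hcard : (F.card : ℝ) = (G.dist x a : ℝ) := by
      rw [hF, List.toFinset_card_of_nodup hdn, SimpleGraph.Walk.length_darts, hplen]
    have hsum : ∑ d ∈ F, (S d.toProd.1 - S d.toProd.2) = S x := by
      rw [hF, List.sum_toFinset _ hdn, telescope G p, hS.1, sub_zero]
    -- energy bound
    have hsq : ∑ d ∈ F, (S d.toProd.1 - S d.toProd.2) ^ 2 ≤ (G.degree x : ℝ) * S x := by
      set g : V × V → ℝ := fun q => (S q.1 - S q.2) ^ 2 with hg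
      set P : Finset (V × V) := Finset.univ.filter (fun p : V × V => G.Adj p.1 p.2) with hP
      have hinj1 : ∀ d ∈ F, ∀ d' ∈ F,
          SimpleGraph.Dart.toProd d = SimpleGraph.Dart.toProd d' → d = d' := by
        intro d _ d' _ h
        exact SimpleGraph.Dart.ext _ _ h
      have hinj2 : ∀ d ∈ F, ∀ d' ∈ F,
          (fun d : G.Dart => d.toProd.swap) d = (fun d : G.Dart => d.toProd.swap) d' →
            d = d' := by
        intro d _ d' _ h
        exact SimpleGraph.Dart.ext _ _ (Prod.swap_injective h)
      set Q1 : Finset (V × V) := F.image SimpleGraph.Dart.toProd with hQ1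
      set Q2 : Finset (V × V) := F.image (fun d => d.toProd.swap) with hQ2
      have hs1 : ∑ q ∈ Q1, g q = ∑ d ∈ F, (S d.toProd.1 - S d.toProd.2) ^ 2 := by
        rw [hQ1, Finset.sum_image hinj1]
      have hs2 : ∑ q ∈ Q2, g q = ∑ d ∈ F, (S d.toProd.1 - S d.toProd.2) ^ 2 := by
        rw [hQ2, Finset.sum_image hinj2]
        refine Finset.sum_congr rfl fun d _ => ?_
        simp only [hg, Prod.fst_swap, Prod.snd_swap]
        ring
      have hdisj : Disjoint Q1 Q2 := by
        rw [Finset.disjoint_left]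
        intro q hq1 hq2
        rw [hQ1, Finset.mem_image] at hq1
        rw [hQ2, Finset.mem_image] at hq2
        obtain ⟨d, hd, rfl⟩ := hq1
        obtain ⟨d', hd', h'⟩ := hq2
        rw [hF, List.mem_toFinset] at hd hd'
        have hedge : SimpleGraph.Dart.edge d' = SimpleGraph.Dart.edge d := by
          rw [SimpleGraph.dart_edge_eq_iff]
          right
          apply SimpleGraph.Dart.ext
          rw [SimpleGraph.Dart.symm_toProd, ← h', Prod.swap_swap]
        have hdd : d' = d := List.inj_on_of_nodup_map hedges hd' hd hedge
        subst hdd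
        have : d'.toProd.1 = d'.toProd.2 := by
          have := congrArg Prod.fst h'
          simpa [Prod.swap] using this.symm
        exact G.loopless.irrefl _ (this ▸ d'.adj)
      have hsub : Q1 ∪ Q2 ⊆ P := by
        intro q hq
        rw [hP, Finset.mem_filter]
        refine ⟨Finset.mem_univ q, ?_⟩
        rcases Finset.mem_union.1 hq with hq | hq
        · rw [hQ1, Finset.mem_image] at hq
          obtain ⟨d, _, rfl⟩ := hq
          exact d.adj
        · rw [hQ2, Finset.mem_image] at hq
          obtain ⟨d, _, rfl⟩ := hq
          exact (d.adj).symm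
      have hPsum : ∑ q ∈ P, g q = 2 * ((G.degree x : ℝ) * S x) := by
        rw [hP]
        rw [sum_adj_pairs G (fun v u => (S v - S u) ^ 2)]
        exact energy_eq G hxa hS
      have hle : ∑ q ∈ Q1 ∪ Q2, g q ≤ ∑ q ∈ P, g q :=
        Finset.sum_le_sum_of_subset_of_nonneg hsub (fun q _ _ => sq_nonneg _)
      rw [Finset.sum_union hdisj, hs1, hs2, hPsum] at hle
      linarith
    have hcs := sq_sum_le_card_mul_sum_sq (s := F)
      (f := fun d => (S d.toProd.1 - S d.toProd.2))
    rw [hsum] at hcs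
    have : S x ^ 2 ≤ (G.dist x a : ℝ) * ((G.degree x : ℝ) * S x) := by
      calc S x ^ 2 ≤ (F.card : ℝ) * ∑ d ∈ F, (S d.toProd.1 - S d.toProd.2) ^ 2 := hcs
        _ ≤ (G.dist x a : ℝ) * ((G.degree x : ℝ) * S x) := by
            rw [hcard]
            exact mul_le_mul_of_nonneg_left hsq (by positivity)
    nlinarith [this, hx0]
  calc S v ≤ max (S x) 0 := hvmax v
    _ ≤ (G.degree x : ℝ) * (G.dist x a : ℝ) := max_le key hDnn
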